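/- Let f : ℝ^d → ℝ^d and, for T > 0, N ≥ 1, α > 0, l' > 0, define f^α(x) = f(x)/(1 + (T/N)^α |x|^{l'}). If |f(x)| ≤ L₁(1 + |x|^{l+1}) and l' ≥ ⌈2α⌉ · l, then there exists K = K(L₁, l, l', α, T) such that |f^α(x)| ≤ K · N^{α/⌈2α⌉} · (1 + |x|) for all x ∈ ℝ^d. In particular, since α/⌈2α⌉ ≤ 1/2, the tamed drift grows at most like √N times a linear function of x. -/

import Mathlib

set_option maxHeartbeats 1000000


theorem stmt3 {d : ℕ}
    (f : EuclideanSpace ℝ (Fin d) → EuclideanSpace ℝ (Fin d))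
    (L₁ l l' T α : ℝ) (hL₁ : 0 < L₁) (hl : 0 < l) (hl' : 0 < l')
    (hT : 0 < T) (hα : 0 < α)
    (hf : ∀ x, ‖f x‖ ≤ L₁ * (1 + ‖x‖ ^ (l + 1)))
    (hll' : (⌈2 * α⌉₊ : ℝ) * l ≤ l') :
    ∃ K > (0:ℝ), ∀ N : ℕ, 1 ≤ N → ∀ x : EuclideanSpace ℝ (Fin d),
      ‖(1 + (T / (N:ℝ)) ^ α * ‖x‖ ^ l')⁻¹ • f x‖
        ≤ K * (N:ℝ) ^ (α / (⌈2 * α⌉₊ : ℝ)) * (1 + ‖x‖) := by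
  have hn1 : 1 ≤ ⌈2 * α⌉₊ := Nat.one_le_ceil_iff.mpr (by linarith)
  set n : ℕ := ⌈2 * α⌉₊ with hn
  have hnR : (0:ℝ) < n := by exact_mod_cast hn1
  set β : ℝ := α / n with hβdef
  have hβ : 0 < β := div_pos hα hnR
  set C : ℝ := (1 / T) ^ β with hC
  have hC0 : 0 ≤ C := Real.rpow_nonneg (by positivity) _
  refine ⟨2 * L₁ * (1 + C), by positivity, ?_⟩
  intro N hN x
  set a := ‖x‖ with ha
  have ha0 : (0:ℝ) ≤ a := norm_nonneg x
  have hb : (1:ℝ) ≤ (N:ℝ) := by exact_mod_cast hN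
  have hb0 : (0:ℝ) < (N:ℝ) := by linarith
  have hNβ : (1:ℝ) ≤ (N:ℝ) ^ β := Real.one_le_rpow hb hβ.le
  have hDpos : (0:ℝ) < 1 + (T / N) ^ α * a ^ l' := by positivity
  set D : ℝ := 1 + (T / N) ^ α * a ^ l' with hD
  have hD1 : (1:ℝ) ≤ D := by
    rw [hD]
    have : (0:ℝ) ≤ (T / (N:ℝ)) ^ α * a ^ l' := by positivity
    linarith
  rw [norm_smul, norm_inv, Real.norm_of_nonneg hDpos.le]
  rw [inv_mul_le_iff₀ hDpos]
  have hfx := hf x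
  rcases le_or_gt a 1 with hA | hA
  · -- small case
    have h1 : a ^ (l + 1) ≤ 1 := Real.rpow_le_one ha0 hA (by linarith)
    have h2 : ‖f x‖ ≤ 2 * L₁ := by nlinarith
    have h3 : (1:ℝ) ≤ (N:ℝ) ^ β * (1 + a) := by nlinarith
    have h5 : (1:ℝ) ≤ (N:ℝ) ^ β * (1 + a) * D := by nlinarith
    have h4 : 2 * L₁ * (1 + C) * 1 ≤ 2 * L₁ * (1 + C) * ((N:ℝ) ^ β * (1 + a) * D) :=
      mul_le_mul_of_nonneg_left h5 (by positivity)
    nlinarith [h4, hC0, hL₁]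
  · -- a > 1
    have hA1 : (1:ℝ) ≤ a := hA.le
    have ha0' : (0:ℝ) < a := by linarith
    set y : ℝ := a ^ l with hy
    have hy1 : (1:ℝ) ≤ y := Real.one_le_rpow hA1 hl.le
    have hy0 : (0:ℝ) ≤ y := by linarith
    -- y^n ≤ a^l'
    have hyn : y ^ n ≤ a ^ l' := by
      have h1 : y ^ n = a ^ ((n:ℝ) * l) := by
        rw [hy, ← Real.rpow_natCast (a ^ l) n, ← Real.rpow_mul ha0]
        ring_nf
      rw [h1]
      exact Real.rpow_le_rpow_of_exponent_le hA1 hll'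
    set z : ℝ := (T / N) ^ α * y ^ n with hz
    have hz0 : (0:ℝ) ≤ z := by positivity
    have hzD : 1 + z ≤ D := by
      have : (T / N) ^ α * y ^ n ≤ (T / N) ^ α * a ^ l' :=
        mul_le_mul_of_nonneg_left hyn (by positivity)
      simp only [hD, hz]; linarith
    -- key identity: y = (N/T)^β * z^(1/n)
    have hkey : y = ((N:ℝ) / T) ^ β * z ^ ((1:ℝ) / n) := by
      have h1 : z ^ ((1:ℝ) / n) = ((T / (N:ℝ)) ^ α) ^ ((1:ℝ)/n) * (y ^ n) ^ ((1:ℝ)/n) :=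
        Real.mul_rpow (by positivity) (by positivity)
      have h2 : ((T / (N:ℝ)) ^ α) ^ ((1:ℝ)/n) = (T / (N:ℝ)) ^ β := by
        rw [← Real.rpow_mul (by positivity)]
        congr 1
        field_simp [hβdef]
        rw [hβdef]; field_simp
      have h3 : ((y:ℝ) ^ n) ^ ((1:ℝ)/n) = y := by
        rw [← Real.rpow_natCast y n, ← Real.rpow_mul hy0]
        rw [mul_one_div, div_self (ne_of_gt hnR), Real.rpow_one]
      rw [h1, h2, h3, ← mul_assoc, ← Real.mul_rpow (by positivity) (by positivity)]
      rw [div_mul_div_comm, mul_comm (N:ℝ) T, div_self (by positivity)]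
      rw [Real.one_rpow, one_mul]
    -- z^(1/n) ≤ 1 + z
    have hzpow : z ^ ((1:ℝ) / n) ≤ 1 + z := by
      rcases le_or_gt z 1 with hz1 | hz1
      · have := Real.rpow_le_one hz0 hz1 (by positivity : (0:ℝ) ≤ 1 / (n:ℝ))
        linarith
      · have h4 : z ^ ((1:ℝ)/n) ≤ z ^ (1:ℝ) := by
          apply Real.rpow_le_rpow_of_exponent_le hz1.le
          rw [div_le_one hnR]; exact_mod_cast hn1
        rw [Real.rpow_one] at h4
        linarith
    have hNT : ((N:ℝ) / T) ^ β = (N:ℝ) ^ β * C := by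
      rw [hC, div_eq_mul_one_div, Real.mul_rpow hb0.le (by positivity)]
    have hNTpos : (0:ℝ) ≤ ((N:ℝ) / T) ^ β := by positivity
    have hyD : y ≤ (N:ℝ) ^ β * C * D := by
      calc y = ((N:ℝ) / T) ^ β * z ^ ((1:ℝ) / n) := hkey
        _ ≤ ((N:ℝ) / T) ^ β * (1 + z) := mul_le_mul_of_nonneg_left hzpow hNTpos
        _ ≤ ((N:ℝ) / T) ^ β * D := mul_le_mul_of_nonneg_left hzD hNTpos
        _ = (N:ℝ) ^ β * C * D := by rw [hNT]
    -- 1 + a^(l+1) = 1 + y * a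
    have hal : a ^ (l + 1) = y * a := by
      rw [hy, Real.rpow_add ha0', Real.rpow_one]
    have h1y : 1 + y ≤ (N:ℝ) ^ β * (1 + C) * D := by
      have e1 : 1 + y ≤ D + (N:ℝ) ^ β * C * D := by linarith
      have e2 : D ≤ (N:ℝ) ^ β * D :=
        le_mul_of_one_le_left (le_trans zero_le_one hD1) hNβ
      have e3 : (N:ℝ) ^ β * D + (N:ℝ) ^ β * C * D = (N:ℝ) ^ β * (1 + C) * D := by ring
      linarith
    clear_value a y z D C β n
    have hfb : ‖f x‖ ≤ L₁ * (1 + y) * (1 + a) := by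
      rw [← ha, hal] at hfx
      have e0 : 1 + y * a ≤ (1 + y) * (1 + a) := by nlinarith
      have e1 : L₁ * (1 + y * a) ≤ L₁ * ((1 + y) * (1 + a)) :=
        mul_le_mul_of_nonneg_left e0 hL₁.le
      calc ‖f x‖ ≤ L₁ * (1 + y * a) := hfx
        _ ≤ L₁ * ((1 + y) * (1 + a)) := e1
        _ = L₁ * (1 + y) * (1 + a) := by ring
    have hfin : L₁ * (1 + y) * (1 + a) ≤ 2 * L₁ * (1 + C) * ((N:ℝ) ^ β * (1 + a) * D) := by
      have e3 : (1 + y) * (1 + a) ≤ (N:ℝ) ^ β * (1 + C) * D * (1 + a) :=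
        mul_le_mul_of_nonneg_right h1y (by linarith)
      have e4 : L₁ * ((1 + y) * (1 + a)) ≤ L₁ * ((N:ℝ) ^ β * (1 + C) * D * (1 + a)) :=
        mul_le_mul_of_nonneg_left e3 hL₁.le
      have hX : (0:ℝ) ≤ L₁ * ((N:ℝ) ^ β * (1 + C) * D * (1 + a)) :=
        mul_nonneg hL₁.le (mul_nonneg (mul_nonneg (mul_nonneg
          (le_trans zero_le_one hNβ) (by linarith)) hDpos.le) (by linarith))
      linarith
    calc ‖f x‖ ≤ L₁ * (1 + y) * (1 + a) := hfb
      _ ≤ 2 * L₁ * (1 + C) * ((N:ℝ) ^ β * (1 + a) * D) := hfin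
      _ = D * (2 * L₁ * (1 + C) * (N:ℝ) ^ β * (1 + a)) := by ring
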